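/- Let F be a field, V a finite-dimensional F-vector space with dim_F V = k ≥ 1, n a natural number, and f a finitely supported function from exponent vectors in ℕ^n to V. Suppose B is a cone-closed finite set of exponent vectors such that the family {f(m) : m ∈ B} is linearly independent over F and spans the F-linear span of all values of f. Then every m ∈ B satisfies ∏_{i=1}^{n} (mᵢ + 1) ≤ k (cone-size at most k) and |{i : mᵢ > 0}| ≤ ⌊log₂ k⌋ (support size at most log₂ k). -/

import Mathlib

/-- **Cone-closed basis implies low-cone and low-support concentration.**
If a polynomial `f` over a `k`-dimensional vector space `V` (represented as a
finitely supported function from exponent vectors to `V`) has a cone-closed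
basis `B` of its coefficient span, then every monomial in `B` has cone-size at
most `k` and support size at most `⌊log₂ k⌋`. -/
theorem cone_closed_basis_low_cone_low_support
    (F : Type*) [Field F] (V : Type*) [AddCommGroup V] [Module F V]
    [FiniteDimensional F V] (k n : ℕ) (hk : 1 ≤ k)
    (hdim : Module.finrank F V = k)
    (f : (Fin n → ℕ) →₀ V) (B : Finset (Fin n → ℕ))
    (hclosed : ∀ m ∈ B, ∀ e : Fin n → ℕ, e ≤ m → e ∈ B)
    (hind : LinearIndependent F (fun m : B => f m))
    (hspan : Submodule.span F (⇑f '' ↑B) = Submodule.span F (Set.range ⇑f)) :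
    ∀ m ∈ B, (∏ i, (m i + 1)) ≤ k ∧
      (Finset.univ.filter fun i => 0 < m i).card ≤ Nat.log 2 k := by
  intro m hm
  have hcardB : B.card ≤ k := by
    have := hind.fintype_card_le_finrank
    simpa [hdim, Fintype.card_coe] using this
  have hsub : Finset.Iic m ⊆ B := fun e he => hclosed m hm e (Finset.mem_Iic.mp he)
  have hIic : (Finset.Iic m).card = ∏ i, (m i + 1) := by
    rw [Pi.card_Iic]
    simp [Nat.card_Iic]
  have hprod : (∏ i, (m i + 1)) ≤ k := by
    rw [← hIic]
    exact le_trans (Finset.card_le_card hsub) hcardB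
  refine ⟨hprod, ?_⟩
  have hpow : 2 ^ (Finset.univ.filter fun i => 0 < m i).card ≤ ∏ i, (m i + 1) := by
    calc 2 ^ (Finset.univ.filter fun i => 0 < m i).card
        = ∏ i ∈ Finset.univ.filter fun i => 0 < m i, 2 := by
          rw [Finset.prod_const]
      _ ≤ ∏ i ∈ Finset.univ.filter fun i => 0 < m i, (m i + 1) := by
          apply Finset.prod_le_prod
          · intros; norm_num
          · intro i hi
            have := (Finset.mem_filter.mp hi).2
            omega
      _ ≤ ∏ i, (m i + 1) := by
          apply Finset.prod_le_prod_of_subset_of_one_le'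
          · exact Finset.filter_subset _ _
          · intros; omega
  exact (Nat.le_log_iff_pow_le one_lt_two (by omega)).mpr (le_trans hpow hprod)
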